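/- For every w ∈ ℝ with w not a multiple of 2π, the integral ∫₀¹ ((1-r²)/(1-2r·cos w + r²) - 1) · (1/r) dr equals -log(2(1-cos w)). -/

import Mathlib

open MeasureTheory Real

theorem stmt_0 (w : ℝ) (hw : ∀ k : ℤ, w ≠ 2 * k * π) :
    ∫ r in Set.Ioo (0:ℝ) 1,
      ((1 - r ^ 2) / (1 - 2 * r * Real.cos w + r ^ 2) - 1) * (1 / r)
      = - Real.log (2 * (1 - Real.cos w)) := by
  set c := Real.cos w with hc_def
  have hc : c < 1 := by
    refine lt_of_le_of_ne (Real.cos_le_one w) ?_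
    intro h
    rcases (Real.cos_eq_one_iff w).mp h with ⟨n, hn⟩
    exact hw n (by linarith)
  have hQ : ∀ r : ℝ, r ∈ Set.Icc (0:ℝ) 1 → 0 < 1 - 2 * r * c + r ^ 2 := by
    intro r hr
    nlinarith [sq_nonneg (1 - r), hr.1, hr.2, mul_nonneg hr.1 (sub_nonneg.mpr hc.le)]
  have hQ' : ∀ r : ℝ, r ∈ Set.Icc (0:ℝ) 1 → (1 - 2 * r * c + r ^ 2) ≠ 0 :=
    fun r hr => (hQ r hr).ne'
  have key : ∫ r in Set.Ioo (0:ℝ) 1,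
      ((1 - r ^ 2) / (1 - 2 * r * c + r ^ 2) - 1) * (1 / r)
      = ∫ r in Set.Ioo (0:ℝ) 1, (2 * c - 2 * r) / (1 - 2 * r * c + r ^ 2) := by
    refine setIntegral_congr_fun measurableSet_Ioo ?_
    intro r hr
    have hr0 : r ≠ 0 := ne_of_gt hr.1
    have hQr : (1 - 2 * r * c + r ^ 2) ≠ 0 := hQ' r ⟨hr.1.le, hr.2.le⟩
    field_simp
    have hQr2 : 1 - r * 2 * c + r ^ 2 ≠ 0 := by convert hQr using 1; ring
    rw [div_sub_one hQr2]
    ring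
  rw [key, ← MeasureTheory.integral_Ioc_eq_integral_Ioo,
    ← intervalIntegral.integral_of_le (zero_le_one)]
  have hderiv : ∀ r ∈ Set.uIcc (0:ℝ) 1,
      HasDerivAt (fun r => -Real.log (1 - 2 * r * c + r ^ 2))
        ((2 * c - 2 * r) / (1 - 2 * r * c + r ^ 2)) r := by
    intro r hr
    rw [Set.uIcc_of_le zero_le_one] at hr
    have hQd : HasDerivAt (fun r : ℝ => 1 - 2 * r * c + r ^ 2) (2 * r - 2 * c) r := by
      have heq : (fun r : ℝ => 1 - 2 * r * c + r ^ 2)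
          = fun y : ℝ => (1 - 2 * c * y) + y ^ 2 := by ext y; ring
      rw [heq]
      have h := (((hasDerivAt_id r).const_mul (2 * c)).const_sub 1).add (hasDerivAt_pow 2 r)
      refine h.congr_deriv ?_
      push_cast
      ring
    have h2 := (hQd.log (hQ' r hr)).neg
    refine h2.congr_deriv ?_
    ring
  have hcont : ContinuousOn (fun r : ℝ => (2 * c - 2 * r) / (1 - 2 * r * c + r ^ 2))
      (Set.uIcc (0:ℝ) 1) := by
    rw [Set.uIcc_of_le zero_le_one]
    exact ContinuousOn.div (by fun_prop) (by fun_prop) (fun r hr => hQ' r hr)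
  rw [intervalIntegral.integral_eq_sub_of_hasDerivAt hderiv hcont.intervalIntegrable]
  have h1 : (1 : ℝ) - 2 * 1 * c + 1 ^ 2 = 2 * (1 - c) := by ring
  have h0 : (1 : ℝ) - 2 * 0 * c + 0 ^ 2 = 1 := by ring
  simp [h1, h0]
  rw [show (1:ℝ) - 2 * c + 1 = 2 * (1 - c) from by ring]
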